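/- Let F be a finite field with exactly q elements, let m, n, r be natural numbers with r ≤ min(m, n), and let V = Fin m → F, W = Fin n → F. Then the number of F-linear maps f : V →ₗ[F] W whose rank equals r (i.e. the dimension of the range of f is r) satisfies: (Nat.card {f : V →ₗ[F] W // finrank F (range f) = r}) · ∏_{i=0}^{r−1} (q^r − q^i) = (∏_{i=0}^{r−1} (q^m − q^i)) · (∏_{i=0}^{r−1} (q^n − q^i)). In particular this count equals the product of the two Gaussian binomial coefficients [m choose r]_q and [n choose r]_q with ∏_{i=0}^{r−1}(q^r − q^i). -/

import Mathlib

open LinearMap Module Function Matrix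

section Aux
variable {F : Type*} [Field F] [Fintype F]

instance auxFinite (a b : ℕ) : Finite ((Fin a → F) →ₗ[F] (Fin b → F)) :=
  Finite.of_injective (fun f => (f : (Fin a → F) → (Fin b → F))) DFunLike.coe_injective

lemma aux_inj_iff {V W : Type*} [AddCommGroup V] [Module F V] [AddCommGroup W] [Module F W]
    {ι : Type*} [Fintype ι] (b : Basis ι F V) (f : V →ₗ[F] W) :
    Function.Injective f ↔ LinearIndependent F (f ∘ b) := by
  constructor
  · intro h
    exact b.linearIndependent.map' f (LinearMap.ker_eq_bot.2 h)
  · intro h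
    rw [← LinearMap.ker_eq_bot, eq_bot_iff]
    intro x hx
    have hx' : f x = 0 := hx
    have hz := Fintype.linearIndependent_iff.1 h (fun i => b.repr x i) ?_
    · have hxr : x = ∑ i, b.repr x i • b i := (b.sum_repr x).symm
      simp only [hz, zero_smul, Finset.sum_const_zero] at hxr
      simp [hxr]
    · simp only [Function.comp_apply, ← _root_.map_smul, ← map_sum, b.sum_repr, hx']
end Aux

section Aux2
variable {F : Type*} [Field F] [Fintype F]

lemma aux_comp_basisFun (d n : ℕ) (s : Fin d → (Fin n → F)) :
    ((Pi.basisFun F (Fin d)).constr F s) ∘ (Pi.basisFun F (Fin d)) = s :=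
  funext fun j => (Pi.basisFun F (Fin d)).constr_basis F s j

lemma aux_countInj (q d n : ℕ) (hq : Fintype.card F = q) (h : d ≤ n) :
    Nat.card {i : (Fin d → F) →ₗ[F] (Fin n → F) // Function.Injective i} =
      ∏ j ∈ Finset.range d, (q ^ n - q ^ j) := by
  have e : {i : (Fin d → F) →ₗ[F] (Fin n → F) // Function.Injective i} ≃
      {s : Fin d → (Fin n → F) // LinearIndependent F s} :=
  { toFun := fun i => ⟨i.1 ∘ Pi.basisFun F (Fin d), (aux_inj_iff _ i.1).1 i.2⟩
    invFun := fun s => ⟨(Pi.basisFun F (Fin d)).constr F s.1, by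
      rw [aux_inj_iff (Pi.basisFun F (Fin d)), aux_comp_basisFun]
      exact s.2⟩
    left_inv := fun i => Subtype.ext ((Pi.basisFun F (Fin d)).constr_self F i.1)
    right_inv := fun s => Subtype.ext (aux_comp_basisFun d n s.1) }
  rw [Nat.card_congr e, card_linearIndependent (K := F)
      (by rw [Module.finrank_fin_fun]; exact h)]
  simp [hq, Module.finrank_fin_fun, Finset.prod_range fun j => q ^ n - q ^ j]
end Aux2

section Aux3
variable {F : Type*} [Field F] [Fintype F]

omit [Fintype F] in
lemma aux_surj_iff {m r : ℕ} (f : (Fin m → F) →ₗ[F] (Fin r → F)) :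
    Function.Surjective f ↔ finrank F (LinearMap.range f) = r := by
  constructor
  · intro h
    rw [LinearMap.range_eq_top.2 h, finrank_top, Module.finrank_fin_fun]
  · intro h
    rw [← LinearMap.range_eq_top]
    apply Submodule.eq_top_of_finrank_eq
    rw [h, Module.finrank_fin_fun]

omit [Fintype F] in
lemma aux_inj_iff_rank {m r : ℕ} (f : (Fin r → F) →ₗ[F] (Fin m → F)) :
    Function.Injective f ↔ finrank F (LinearMap.range f) = r := by
  have hrn := LinearMap.finrank_range_add_finrank_ker f
  rw [Module.finrank_fin_fun] at hrn
  constructor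
  · intro h
    rw [LinearMap.ker_eq_bot.2 h, finrank_bot, add_zero] at hrn
    exact hrn
  · intro h
    rw [← LinearMap.ker_eq_bot, ← Submodule.finrank_eq_zero (R := F)]
    omega

lemma aux_countSurj (q m r : ℕ) (hq : Fintype.card F = q) (h : r ≤ m) :
    Nat.card {p : (Fin m → F) →ₗ[F] (Fin r → F) // Function.Surjective p} =
      ∏ i ∈ Finset.range r, (q ^ m - q ^ i) := by
  rw [← aux_countInj q r m hq h]
  apply Nat.card_congr
  refine Equiv.subtypeEquiv
    (LinearMap.toMatrix'.toEquiv.trans ((Equiv.mk Matrix.transpose Matrix.transpose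
      Matrix.transpose_transpose Matrix.transpose_transpose).trans
      Matrix.toLin'.toEquiv)) (fun p => ?_)
  rw [aux_surj_iff, aux_inj_iff_rank]
  have h1 : finrank F (LinearMap.range p) = (LinearMap.toMatrix' p).rank := by
    conv_lhs => rw [← Matrix.toLin'_toMatrix' p]
    rw [Matrix.rank, ← Matrix.toLin'_apply']
  have h2 : finrank F (LinearMap.range (Matrix.toLin' (LinearMap.toMatrix' p)ᵀ)) =
      ((LinearMap.toMatrix' p)ᵀ).rank := by
    rw [Matrix.rank, ← Matrix.toLin'_apply']
  simp only [Equiv.trans_apply, LinearEquiv.coe_toEquiv, Equiv.coe_fn_mk]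
  rw [h1]
  erw [h2]
  rw [Matrix.rank_transpose]
end Aux3

section Aux4
variable {F : Type*} [Field F] {m n r : ℕ}

lemma aux_range_comp {p : (Fin m → F) →ₗ[F] (Fin r → F)} {i : (Fin r → F) →ₗ[F] (Fin n → F)}
    (hs : Function.Surjective p) : LinearMap.range (i ∘ₗ p) = LinearMap.range i := by
  rw [LinearMap.range_comp, LinearMap.range_eq_top.2 hs, Submodule.map_top]

lemma aux_rank_comp {p : (Fin m → F) →ₗ[F] (Fin r → F)} {i : (Fin r → F) →ₗ[F] (Fin n → F)}
    (hs : Function.Surjective p) (hi : Function.Injective i) :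
    finrank F (LinearMap.range (i ∘ₗ p)) = r := by
  rw [aux_range_comp hs, LinearMap.finrank_range_of_inj hi, Module.finrank_fin_fun]

noncomputable def fibEquiv (f : (Fin m → F) →ₗ[F] (Fin n → F))
    (hf : finrank F (LinearMap.range f) = r) :
    {pi : ((Fin m → F) →ₗ[F] (Fin r → F)) × ((Fin r → F) →ₗ[F] (Fin n → F)) //
      Function.Surjective pi.1 ∧ Function.Injective pi.2 ∧ pi.2 ∘ₗ pi.1 = f} ≃
      ((Fin r → F) ≃ₗ[F] (Fin r → F)) := by
  have e₀ : (LinearMap.range f) ≃ₗ[F] (Fin r → F) :=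
    LinearEquiv.ofFinrankEq _ _ (by rw [hf, Module.finrank_fin_fun])
  exact
  { toFun := fun x =>
      ((LinearEquiv.ofInjective x.1.2 x.2.2.1).trans
        (LinearEquiv.ofEq _ _
          ((aux_range_comp x.2.1).symm.trans (congrArg LinearMap.range x.2.2.2)))).trans e₀
    invFun := fun g =>
      ⟨(g.symm.toLinearMap ∘ₗ (e₀.toLinearMap ∘ₗ f.rangeRestrict),
        (LinearMap.range f).subtype ∘ₗ (e₀.symm.toLinearMap ∘ₗ g.toLinearMap)),
        by
          simp only [LinearMap.coe_comp, LinearEquiv.coe_coe]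
          exact g.symm.surjective.comp (e₀.surjective.comp f.surjective_rangeRestrict),
        by
          simp only [LinearMap.coe_comp, LinearEquiv.coe_coe]
          exact (LinearMap.range f).injective_subtype.comp (e₀.symm.injective.comp g.injective),
        by
          ext x
          simp⟩
    left_inv := by
      rintro ⟨⟨p, i⟩, hs, hi, hc⟩
      apply Subtype.ext
      refine Prod.ext ?_ ?_
      · apply LinearMap.ext
        intro x
        simp only [LinearMap.coe_comp, LinearEquiv.coe_coe, Function.comp_apply]
        have hval : f.rangeRestrict x =
            (LinearEquiv.ofEq _ _
              ((aux_range_comp hs).symm.trans (congrArg LinearMap.range hc)))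
              ((LinearEquiv.ofInjective i hi) (p x)) := by
          apply Subtype.ext
          simp [← hc]
        rw [LinearEquiv.symm_apply_eq]
        simp only [LinearEquiv.trans_apply]
        exact congrArg e₀ hval
      · apply LinearMap.ext
        intro x
        simp
    right_inv := by
      intro g
      apply LinearEquiv.toLinearMap_injective
      apply LinearMap.ext
      intro x
      simp only [LinearEquiv.coe_coe, LinearEquiv.trans_apply, LinearMap.coe_comp,
        Function.comp_apply]
      conv_rhs => rw [← e₀.apply_symm_apply (g x)]
      congr 1 }
end Aux4

section Aux5
variable {F : Type*} [Field F] [Fintype F] {m n r : ℕ}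

omit [Fintype F] in
def sigmaEquiv (m n r : ℕ) :
    (Σ f : {f : (Fin m → F) →ₗ[F] (Fin n → F) // finrank F (LinearMap.range f) = r},
      {pi : ((Fin m → F) →ₗ[F] (Fin r → F)) × ((Fin r → F) →ₗ[F] (Fin n → F)) //
        Function.Surjective pi.1 ∧ Function.Injective pi.2 ∧ pi.2 ∘ₗ pi.1 = f.1}) ≃
    {pi : ((Fin m → F) →ₗ[F] (Fin r → F)) × ((Fin r → F) →ₗ[F] (Fin n → F)) //
        Function.Surjective pi.1 ∧ Function.Injective pi.2} where
  toFun x := ⟨x.2.1, x.2.2.1, x.2.2.2.1⟩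
  invFun y := ⟨⟨y.1.2 ∘ₗ y.1.1, aux_rank_comp y.2.1 y.2.2⟩, ⟨y.1, y.2.1, y.2.2, rfl⟩⟩
  left_inv := by
    rintro ⟨⟨f, hf⟩, ⟨pi, hs, hi, hc⟩⟩
    dsimp only at hc
    subst hc
    rfl
  right_inv := fun y => rfl

lemma aux_card_linearEquiv (q r : ℕ) (hq : Fintype.card F = q) :
    Nat.card ((Fin r → F) ≃ₗ[F] (Fin r → F)) = ∏ i ∈ Finset.range r, (q ^ r - q ^ i) := by
  rw [← Nat.card_congr ((Matrix.GeneralLinearGroup.toLin.trans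
    (LinearMap.GeneralLinearGroup.generalLinearEquiv F (Fin r → F))).toEquiv),
    Matrix.card_GL_field]
  simp [hq, Finset.prod_range fun i => q ^ r - q ^ i]

end Aux5

theorem card_rank_r_linear_maps
    (F : Type*) [Field F] [Fintype F] (q m n r : ℕ) (hq : Fintype.card F = q)
    (hr : r ≤ min m n) :
    Nat.card {f : (Fin m → F) →ₗ[F] (Fin n → F) //
        Module.finrank F (LinearMap.range f) = r} *
      (∏ i ∈ Finset.range r, (q ^ r - q ^ i)) =
    (∏ i ∈ Finset.range r, (q ^ m - q ^ i)) * (∏ i ∈ Finset.range r, (q ^ n - q ^ i)) := by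
  have hrm : r ≤ m := le_trans hr (min_le_left m n)
  have hrn : r ≤ n := le_trans hr (min_le_right m n)
  have E : {pi : ((Fin m → F) →ₗ[F] (Fin r → F)) × ((Fin r → F) →ₗ[F] (Fin n → F)) //
        Function.Surjective pi.1 ∧ Function.Injective pi.2} ≃
      {f : (Fin m → F) →ₗ[F] (Fin n → F) // finrank F (LinearMap.range f) = r} ×
        ((Fin r → F) ≃ₗ[F] (Fin r → F)) :=
    (sigmaEquiv m n r).symm.trans ((Equiv.sigmaCongrRight (fun f : {f : (Fin m → F) →ₗ[F] (Fin n → F) //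
        finrank F (LinearMap.range f) = r} => fibEquiv f.1 f.2)).trans
      (Equiv.sigmaEquivProd _ _))
  have h1 := Nat.card_congr E
  rw [Nat.card_prod, aux_card_linearEquiv q r hq] at h1
  have h2 : Nat.card {pi : ((Fin m → F) →ₗ[F] (Fin r → F)) × ((Fin r → F) →ₗ[F] (Fin n → F)) //
        Function.Surjective pi.1 ∧ Function.Injective pi.2} =
      (∏ i ∈ Finset.range r, (q ^ m - q ^ i)) * (∏ i ∈ Finset.range r, (q ^ n - q ^ i)) := by
    have h3 := Nat.card_congr (Equiv.subtypeProdEquivProd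
      (p := fun p : (Fin m → F) →ₗ[F] (Fin r → F) => Function.Surjective p)
      (q := fun i : (Fin r → F) →ₗ[F] (Fin n → F) => Function.Injective i))
    rw [h3, Nat.card_prod, aux_countSurj q m r hq hrm, aux_countInj q r n hq hrn]
  rw [← h1, h2]
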